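/- Let X be a random variable with values in [a,b], with absolutely continuous probability density f : [a,b] → [0,1] whose derivative f' is essentially bounded, and cumulative distribution F(x) = ∫_a^x f(t) dt. Then for all x ∈ [a,(a+b)/2]: |(1/2)[(F(x)+F(a+b-x))/2 + 1/2] - (1/2)(x-(a+b)/2)·(f(x)-f(a+b-x))/2 - (b - E(X))/(b-a)| ≤ [((a+3b)/4 - x)(x-a)²/(3(b-a)³) + (1/3)((a+b)/2 - x)³/(b-a)³]·(b-a)²·‖f'‖_∞, where E(X) = ∫_a^b t f(t) dt. -/

import Mathlib

open MeasureTheory Set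

private lemma aux_poly (A B C c d : ℝ) :
    (∫ s in c..d, (A + B*s + C*s^2)) =
      A*(d-c) + B*(d^2-c^2)/2 + C*(d^3-c^3)/3 := by
  have h : ∀ s : ℝ, HasDerivAt (fun s : ℝ => A*s + B*s^2/2 + C*s^3/3)
      (A + B*s + C*s^2) s := by
    intro s
    have h1 : HasDerivAt (fun s : ℝ => A*s + B*s^2/2 + C*s^3/3)
        (A*1 + B*(↑2*s^1)/2 + C*(↑3*s^2)/3) s :=
      (((hasDerivAt_id s).const_mul A).add
        (((hasDerivAt_pow 2 s).const_mul B).div_const 2)).add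
        (((hasDerivAt_pow 3 s).const_mul C).div_const 3)
    convert h1 using 1
    ring
  rw [intervalIntegral.integral_eq_sub_of_hasDerivAt (fun s _ => h s)
    ((by continuity : Continuous fun s:ℝ => A + B*s + C*s^2).intervalIntegrable _ _)]
  ring

private lemma aux_lin (f : ℝ → ℝ) (c d P Q : ℝ) (hcd : c ≤ d)
    (hf : ContinuousOn f (Icc c d)) :
    ∫ s in c..d, (P + Q*s) * f s
      = P * (∫ s in c..d, f s) + Q * ∫ s in c..d, s * f s := by
  have huicc : uIcc c d = Icc c d := uIcc_of_le hcd
  have hif : IntervalIntegrable f volume c d := by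
    apply ContinuousOn.intervalIntegrable; rw [huicc]; exact hf
  have hisf : IntervalIntegrable (fun s => s * f s) volume c d := by
    apply ContinuousOn.intervalIntegrable; rw [huicc]
    exact continuousOn_id.mul hf
  have h1 : EqOn (fun s => (P + Q*s) * f s)
      (fun s => P * f s + Q * (s * f s)) (uIcc c d) := fun s _ => by ring
  rw [intervalIntegral.integral_congr h1,
    intervalIntegral.integral_add (hif.const_mul P) (hisf.const_mul Q),
    intervalIntegral.integral_const_mul, intervalIntegral.integral_const_mul]

private lemma aux_parts (f f' K K' : ℝ → ℝ) (c d : ℝ) (hcd : c ≤ d)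
    (hf : ∀ t ∈ Icc c d, HasDerivAt f (f' t) t)
    (hK : ∀ t, HasDerivAt K (K' t) t)
    (hKc : Continuous K) (hK'c : Continuous K')
    (hint : IntervalIntegrable f' volume c d) :
    ∫ s in c..d, K s * f' s
      = K d * f d - K c * f c - ∫ s in c..d, K' s * f s := by
  have huicc : uIcc c d = Icc c d := uIcc_of_le hcd
  have hcont : ContinuousOn f (Icc c d) := fun t ht =>
    (hf t ht).continuousAt.continuousWithinAt
  have hiK'f : IntervalIntegrable (fun s => K' s * f s) volume c d := by
    apply ContinuousOn.intervalIntegrable; rw [huicc]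
    exact hK'c.continuousOn.mul hcont
  have hiKf' : IntervalIntegrable (fun s => K s * f' s) volume c d :=
    hint.continuousOn_mul hKc.continuousOn
  have key := intervalIntegral.integral_deriv_mul_eq_sub
    (u := K) (u' := K') (v := f) (v' := f')
    (fun s _ => hK s) (fun t ht => hf t (huicc ▸ ht))
    (hK'c.intervalIntegrable c d) hint
  have hadd := intervalIntegral.integral_add hiK'f hiKf'
  rw [hadd] at key
  linarith

private lemma aux_abs (K f' : ℝ → ℝ) (a b c d M : ℝ) (hac : a ≤ c) (hcd : c ≤ d)
    (hdb : d ≤ b) (hK : Continuous K) (hint : IntervalIntegrable f' volume c d)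
    (hM : ∀ᵐ t ∂volume, t ∈ Icc a b → |f' t| ≤ M) :
    |∫ s in c..d, K s * f' s| ≤ (∫ s in c..d, |K s|) * M := by
  have hiKf' : IntervalIntegrable (fun s => K s * f' s) volume c d :=
    hint.continuousOn_mul hK.continuousOn
  have h1 : |∫ s in c..d, K s * f' s| ≤ ∫ s in c..d, |K s * f' s| :=
    intervalIntegral.abs_integral_le_integral_abs hcd
  have hae : ∀ᵐ t ∂(volume.restrict (Icc c d)),
      |K t * f' t| ≤ |K t| * M := by
    rw [ae_restrict_iff' measurableSet_Icc]
    filter_upwards [hM] with t ht hmem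
    have htab : t ∈ Icc a b := ⟨hac.trans hmem.1, hmem.2.trans hdb⟩
    rw [abs_mul]
    exact mul_le_mul_of_nonneg_left (ht htab) (abs_nonneg _)
  have h2 : (∫ s in c..d, |K s * f' s|) ≤ ∫ s in c..d, |K s| * M :=
    intervalIntegral.integral_mono_ae_restrict hcd hiKf'.abs
      ((hK.abs.intervalIntegrable c d).mul_const M) hae
  rw [intervalIntegral.integral_mul_const] at h2
  linarith

set_option maxHeartbeats 1000000 in
theorem pdf_companion_inequality
    (a b : ℝ) (hab : a < b) (f f' : ℝ → ℝ) (M : ℝ)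
    (hrange : ∀ t ∈ Icc a b, f t ∈ Icc (0:ℝ) 1)
    (hf' : ∀ t ∈ Icc a b, HasDerivAt f (f' t) t)
    (hint : IntervalIntegrable f' volume a b)
    (hM : ∀ᵐ t ∂volume, t ∈ Icc a b → |f' t| ≤ M)
    (hdens : (∫ t in a..b, f t) = 1)
    (F : ℝ → ℝ) (hF : ∀ y, F y = ∫ t in a..y, f t)
    (E : ℝ) (hE : E = ∫ t in a..b, t * f t)
    (x : ℝ) (hx : x ∈ Icc a ((a + b)/2)) :
    |(1/2) * ((F x + F (a + b - x)) / 2 + 1/2)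
      - (1/2) * (x - (a + b)/2) * ((f x - f (a + b - x)) / 2)
      - (b - E) / (b - a)|
    ≤ (((a + 3*b)/4 - x) * (x - a)^2 / (3 * (b - a)^3)
       + (1/3) * (((a + b)/2 - x)^3 / (b - a)^3)) * (b - a)^2 * M := by
  obtain ⟨hax, hxm⟩ := hx
  have hL : (0:ℝ) < b - a := sub_pos.2 hab
  have hba : b - a ≠ 0 := ne_of_gt hL
  have hxb : x ≤ b := by linarith
  have hay : a ≤ a + b - x := by linarith
  have hxy : x ≤ a + b - x := by linarith
  have hyb : a + b - x ≤ b := by linarith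
  have hmy : (a + b)/2 ≤ a + b - x := by linarith
  have hcf : ContinuousOn f (Icc a b) := fun t ht =>
    (hf' t ht).continuousAt.continuousWithinAt
  -- integrability of f and t*f on subintervals
  have hsub : ∀ {c d : ℝ}, a ≤ c → c ≤ d → d ≤ b → uIcc c d ⊆ Icc a b := by
    intro c d h1 h2 h3
    rw [uIcc_of_le h2]; exact Icc_subset_Icc h1 h3
  have hif : ∀ {c d : ℝ}, a ≤ c → c ≤ d → d ≤ b → IntervalIntegrable f volume c d :=
    fun h1 h2 h3 => (hcf.mono (hsub h1 h2 h3)).intervalIntegrable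
  have hitf : ∀ {c d : ℝ}, a ≤ c → c ≤ d → d ≤ b →
      IntervalIntegrable (fun t => t * f t) volume c d :=
    fun h1 h2 h3 => (((continuousOn_id.mul hcf)).mono (hsub h1 h2 h3)).intervalIntegrable
  have hif' : ∀ {c d : ℝ}, a ≤ c → c ≤ d → d ≤ b → IntervalIntegrable f' volume c d :=
    fun h1 h2 h3 => hint.mono_set (by rw [uIcc_of_le hab.le]; exact hsub h1 h2 h3)
  have hderiv : ∀ {c d : ℝ}, a ≤ c → d ≤ b → ∀ t ∈ Icc c d, HasDerivAt f (f' t) t :=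
    fun h1 h2 t ht => hf' t ⟨h1.trans ht.1, ht.2.trans h2⟩
  -- kernels
  have hK1d : ∀ s : ℝ, HasDerivAt (fun s => ((a+b)/2 - s) * (s - a))
      ((a+b)/2 + a + (-2)*s) s := by
    intro s
    have h := (HasDerivAt.const_sub ((a+b)/2) (hasDerivAt_id s)).mul
      ((hasDerivAt_id s).sub_const a)
    refine h.congr_deriv ?_; simp only [id_eq]; ring
  have hK2d : ∀ s : ℝ, HasDerivAt (fun s => -(((a+b)/2 - s)^2))
      (a + b + (-2)*s) s := by
    intro s
    have h := ((HasDerivAt.const_sub ((a+b)/2) (hasDerivAt_id s)).pow 2).neg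
    refine h.congr_deriv ?_; simp only [id_eq]; ring
  have hK3d : ∀ s : ℝ, HasDerivAt (fun s => (b - s) * (s - (a+b)/2))
      (b + (a+b)/2 + (-2)*s) s := by
    intro s
    have h := (HasDerivAt.const_sub b (hasDerivAt_id s)).mul
      ((hasDerivAt_id s).sub_const ((a+b)/2))
    refine h.congr_deriv ?_; simp only [id_eq]; ring
  have hK1c : Continuous fun s : ℝ => ((a+b)/2 - s) * (s - a) := by fun_prop
  have hK2c : Continuous fun s : ℝ => -(((a+b)/2 - s)^2) := by fun_prop
  have hK3c : Continuous fun s : ℝ => (b - s) * (s - (a+b)/2) := by fun_prop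
  have hK1'c : Continuous fun s : ℝ => (a+b)/2 + a + (-2)*s := by fun_prop
  have hK2'c : Continuous fun s : ℝ => a + b + (-2)*s := by fun_prop
  have hK3'c : Continuous fun s : ℝ => b + (a+b)/2 + (-2)*s := by fun_prop
  -- integration by parts on the three pieces
  have h1 := aux_parts f f' _ _ a x hax (hderiv le_rfl hxb) hK1d hK1c hK1'c
    (hif' le_rfl hax hxb)
  have h2 := aux_parts f f' _ _ x (a+b-x) hxy (hderiv hax hyb) hK2d hK2c hK2'c
    (hif' hax hxy hyb)
  have h3 := aux_parts f f' _ _ (a+b-x) b hyb (hderiv hay le_rfl) hK3d hK3c hK3'c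
    (hif' hay hyb le_rfl)
  rw [aux_lin f a x ((a+b)/2 + a) (-2) hax (hcf.mono (Icc_subset_Icc le_rfl hxb))] at h1
  rw [aux_lin f x (a+b-x) (a+b) (-2) hxy (hcf.mono (Icc_subset_Icc hax hyb))] at h2
  rw [aux_lin f (a+b-x) b (b + (a+b)/2) (-2) hyb (hcf.mono (Icc_subset_Icc hay le_rfl))] at h3
  -- additivity relations
  have g1 := intervalIntegral.integral_add_adjacent_intervals
    (hif le_rfl hax hxb) (hif hax hxy hyb)
  have g2 := intervalIntegral.integral_add_adjacent_intervals
    (hif le_rfl hay hyb) (hif hay hyb le_rfl)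
  have g3 := intervalIntegral.integral_add_adjacent_intervals
    (hitf le_rfl hax hxb) (hitf hax hxy hyb)
  have g4 := intervalIntegral.integral_add_adjacent_intervals
    (hitf le_rfl hay hyb) (hitf hay hyb le_rfl)
  have hI2 : (∫ t in x..(a+b-x), f t)
      = (∫ t in a..(a+b-x), f t) - (∫ t in a..x, f t) := by linarith
  have hI3 : (∫ t in (a+b-x)..b, f t) = 1 - (∫ t in a..(a+b-x), f t) := by
    rw [hdens] at g2; linarith
  have hS2 : (∫ t in x..(a+b-x), t * f t)
      = (∫ t in a..b, t * f t) - (∫ t in a..x, t * f t)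
        - (∫ t in (a+b-x)..b, t * f t) := by linarith
  -- the key identity
  have key : (1/2) * ((F x + F (a + b - x)) / 2 + 1/2)
      - (1/2) * (x - (a + b)/2) * ((f x - f (a + b - x)) / 2)
      - (b - E) / (b - a)
      = (1/(2*(b-a))) *
        ((∫ s in a..x, ((a+b)/2 - s) * (s - a) * f' s)
          + (∫ s in x..(a+b-x), -((a+b)/2 - s)^2 * f' s)
          + (∫ s in (a+b-x)..b, (b - s) * (s - (a+b)/2) * f' s)) := by
    rw [hF x, hF (a+b-x), hE, h1, h2, h3, hI2, hI3, hS2]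
    field_simp
    ring
  -- bounds on each piece
  have b1 := aux_abs _ f' a b a x M le_rfl hax hxb hK1c (hif' le_rfl hax hxb) hM
  have b2 := aux_abs _ f' a b x (a+b-x) M hax hxy hyb hK2c (hif' hax hxy hyb) hM
  have b3 := aux_abs _ f' a b (a+b-x) b M hay hyb le_rfl hK3c (hif' hay hyb le_rfl) hM
  -- closed forms for the absolute-value integrals
  have j1 : (∫ s in a..x, |((a+b)/2 - s) * (s - a)|)
      = (-(((a+b)/2)*a))*(x-a) + ((a+b)/2 + a)*(x^2-a^2)/2 + (-1)*(x^3-a^3)/3 := by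
    have e : EqOn (fun s => |((a+b)/2 - s) * (s - a)|)
        (fun s => (-(((a+b)/2)*a)) + ((a+b)/2 + a)*s + (-1)*s^2) (uIcc a x) := by
      intro s hs
      rw [uIcc_of_le hax] at hs
      simp only
      rw [abs_of_nonneg (mul_nonneg (by linarith [hs.2]) (by linarith [hs.1]))]
      ring
    rw [intervalIntegral.integral_congr e, aux_poly]
  have j2 : (∫ s in x..(a+b-x), |-((a+b)/2 - s)^2|)
      = (((a+b)/2)^2)*((a+b-x)-x) + (-(a+b))*((a+b-x)^2-x^2)/2
        + 1*((a+b-x)^3-x^3)/3 := by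
    have e : EqOn (fun s => |-((a+b)/2 - s)^2|)
        (fun s => (((a+b)/2)^2) + (-(a+b))*s + 1*s^2) (uIcc x (a+b-x)) := by
      intro s hs
      simp only
      rw [abs_of_nonpos (neg_nonpos.2 (sq_nonneg _))]
      ring
    rw [intervalIntegral.integral_congr e, aux_poly]
  have j3 : (∫ s in (a+b-x)..b, |(b - s) * (s - (a+b)/2)|)
      = (-(b*((a+b)/2)))*(b-(a+b-x)) + (b + (a+b)/2)*(b^2-(a+b-x)^2)/2
        + (-1)*(b^3-(a+b-x)^3)/3 := by
    have e : EqOn (fun s => |(b - s) * (s - (a+b)/2)|)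
        (fun s => (-(b*((a+b)/2))) + (b + (a+b)/2)*s + (-1)*s^2) (uIcc (a+b-x) b) := by
      intro s hs
      rw [uIcc_of_le hyb] at hs
      simp only
      rw [abs_of_nonneg (mul_nonneg (by linarith [hs.2]) (by linarith [hs.1]))]
      ring
    rw [intervalIntegral.integral_congr e, aux_poly]
  have hc : (0:ℝ) < 1/(2*(b-a)) := by positivity
  have hsum : |(∫ s in a..x, ((a+b)/2 - s) * (s - a) * f' s)
      + (∫ s in x..(a+b-x), -((a+b)/2 - s)^2 * f' s)
      + (∫ s in (a+b-x)..b, (b - s) * (s - (a+b)/2) * f' s)|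
      ≤ ((∫ s in a..x, |((a+b)/2 - s) * (s - a)|)
        + (∫ s in x..(a+b-x), |-((a+b)/2 - s)^2|)
        + (∫ s in (a+b-x)..b, |(b - s) * (s - (a+b)/2)|)) * M := by
    have habs := (abs_add_le
      ((∫ s in a..x, ((a+b)/2 - s) * (s - a) * f' s)
        + (∫ s in x..(a+b-x), -((a+b)/2 - s)^2 * f' s))
      (∫ s in (a+b-x)..b, (b - s) * (s - (a+b)/2) * f' s))
    have habs2 := abs_add_le (∫ s in a..x, ((a+b)/2 - s) * (s - a) * f' s)
      (∫ s in x..(a+b-x), -((a+b)/2 - s)^2 * f' s)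
    linarith [b1, b2, b3]
  rw [key, abs_mul, abs_of_nonneg hc.le]
  have hfin := mul_le_mul_of_nonneg_left hsum hc.le
  refine hfin.trans_eq ?_
  rw [j1, j2, j3]
  field_simp
  ring
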